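/- Let E be a real Banach space, X₀, X₁ : E → E continuous vector fields, and ψ : ℝ × E → E a continuously differentiable map with ψ(0,x) = x for all x and ∂ψ/∂t(t,x) = X₁(ψ(t,x)) for all (t,x) (ψ is the flow of X₁). Let c : ℝ → E be a differentiable curve with c(0) = x₀ such that for all t the derivative of ψ(t,·) at c(t) maps c'(t) to X₀(ψ(t,c(t))) (i.e. c is an integral curve of the time-dependent pulled-back field Z_t = (ψ_t)*X₀). Then the curve γ(t) = ψ(t, c(t)) satisfies γ(0) = x₀ and γ'(t) = X₀(γ(t)) + X₁(γ(t)) for all t; that is, the flow of X₀ + X₁ is ψ_t ∘ ψ_t^Z. -/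

import Mathlib

/-- Lemma on composition of flows. Let `ψ` be a `C¹` flow of a vector field `X₁`
on a Banach space `E`, and let `c` be an integral curve, starting at `x₀`, of the
time-dependent pulled-back field `Z_t = (ψ_t)*X₀` (i.e. the derivative of `ψ(t,·)`
at `c(t)` maps `c'(t)` to `X₀(ψ(t,c(t)))`). Then `γ(t) = ψ(t,c(t))` satisfies
`γ(0) = x₀` and `γ'(t) = X₀(γ(t)) + X₁(γ(t))`; that is, the flow of `X₀ + X₁` is
`ψ_t ∘ ψ_t^Z`. -/
theorem stmt15 {E : Type*} [NormedAddCommGroup E] [NormedSpace ℝ E] [CompleteSpace E]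
    (X₀ X₁ : E → E) (hX₀ : Continuous X₀) (hX₁ : Continuous X₁)
    (ψ : ℝ × E → E) (hψC1 : ContDiff ℝ 1 ψ)
    (hψ0 : ∀ x : E, ψ (0, x) = x)
    (hψflow : ∀ (t : ℝ) (x : E), HasDerivAt (fun s : ℝ => ψ (s, x)) (X₁ (ψ (t, x))) t)
    (c : ℝ → E) (x₀ : E) (hc0 : c 0 = x₀) (hc : Differentiable ℝ c)
    (hcZ : ∀ t : ℝ, fderiv ℝ (fun x : E => ψ (t, x)) (c t) (deriv c t)
      = X₀ (ψ (t, c t))) :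
    ψ (0, c 0) = x₀
      ∧ ∀ t : ℝ, HasDerivAt (fun s : ℝ => ψ (s, c s))
          (X₀ (ψ (t, c t)) + X₁ (ψ (t, c t))) t := by
  refine ⟨by rw [hψ0, hc0], fun t => ?_⟩
  have hψd : HasFDerivAt ψ (fderiv ℝ ψ (t, c t)) (t, c t) :=
    (hψC1.differentiable one_ne_zero (t, c t)).hasFDerivAt
  set L := fderiv ℝ ψ (t, c t) with hL
  have hcurve : HasDerivAt (fun s : ℝ => ((s, c s) : ℝ × E)) (1, deriv c t) t :=
    HasDerivAt.prodMk (hasDerivAt_id t) (hc t).hasDerivAt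
  have hcomp : HasDerivAt (fun s : ℝ => ψ (s, c s)) (L (1, deriv c t)) t :=
    hψd.comp_hasDerivAt t hcurve
  have h1 : L ((1 : ℝ), (0 : E)) = X₁ (ψ (t, c t)) := by
    have hline : HasDerivAt (fun s : ℝ => ((s, c t) : ℝ × E)) ((1 : ℝ), (0 : E)) t :=
      HasDerivAt.prodMk (hasDerivAt_id t) (hasDerivAt_const t (c t))
    exact (hψd.comp_hasDerivAt t hline).unique (hψflow t (c t))
  have h2 : L ((0 : ℝ), deriv c t) = X₀ (ψ (t, c t)) := by
    have hinr : HasFDerivAt (fun x : E => ((t, x) : ℝ × E))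
        (ContinuousLinearMap.inr ℝ ℝ E) (c t) :=
      HasFDerivAt.prodMk (hasFDerivAt_const t (c t)) (hasFDerivAt_id (c t))
    have hpart : HasFDerivAt (fun x : E => ψ (t, x))
        (L.comp (ContinuousLinearMap.inr ℝ ℝ E)) (c t) := hψd.comp (c t) hinr
    have := hpart.fderiv
    have h := hcZ t
    rw [this] at h
    simpa using h
  have hkey : L ((1 : ℝ), deriv c t) = X₀ (ψ (t, c t)) + X₁ (ψ (t, c t)) := by
    have : ((1 : ℝ), deriv c t) = ((1 : ℝ), (0 : E)) + ((0 : ℝ), deriv c t) := by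
      simp
    rw [this, map_add, h1, h2, add_comm]
  rwa [hkey] at hcomp
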